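/- arXiv:1712.07367 — 3 statements merged into one kernel-verified Lean document; each statement's English description precedes it below -/
import Mathlib

section
/- Let G be a finite graph and W a graphon representation of G. Then the fractional clique number of G equals that of W: ω_frac(G) = ω_frac(W). -/
open MeasureTheory ENNReal Filter
open scoped Classical

noncomputable section

variable {Ω : Type*} [MeasurableSpace Ω]

/-- A graphon: symmetric measurable function with values in `[0,1]`. -/
def IsGraphon (W : Ω → Ω → ℝ) : Prop :=
  Measurable (Function.uncurry W) ∧ (∀ x y, W x y = W y x) ∧ ∀ x y, W x y ∈ Set.Icc (0 : ℝ) 1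

/-- `A` is an independent set of the graphon `W`: `W = 0` a.e. on `A × A`. -/
def IsIndepSet (μ : Measure Ω) (W : Ω → Ω → ℝ) (A : Set Ω) : Prop :=
  MeasurableSet A ∧ ∀ᵐ p ∂(μ.prod μ), p.1 ∈ A → p.2 ∈ A → W p.1 p.2 = 0

/-- The independence number: supremum of measures of independent sets. -/
def indepNum (μ : Measure Ω) (W : Ω → Ω → ℝ) : ℝ≥0∞ :=
  ⨆ (A : Set Ω) (_ : IsIndepSet μ W A), μ A

/-- Homomorphism density of a finite graph `H` on `Fin k` in `W`
(product over unordered edges, written with `i < j`). -/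
def homDensity {k : ℕ} (μ : Measure Ω) (W : Ω → Ω → ℝ) (H : SimpleGraph (Fin k)) : ℝ :=
  ∫ x : Fin k → Ω,
    ∏ p ∈ Finset.univ.filter (fun p : Fin k × Fin k => p.1 < p.2 ∧ H.Adj p.1 p.2),
      W (x p.1) (x p.2) ∂(Measure.pi fun _ => μ)

/-- The cut norm of a kernel `U`. -/
def cutNorm (μ : Measure Ω) (U : Ω → Ω → ℝ) : ℝ :=
  ⨆ (S : {S : Set Ω // MeasurableSet S}) (T : {T : Set Ω // MeasurableSet T}),
    |∫ p in S.1 ×ˢ T.1, U p.1 p.2 ∂(μ.prod μ)|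

/-- The cut distance: infimum over measure-preserving isomorphisms of the cut norm. -/
def cutDist (μ : Measure Ω) (W₁ W₂ : Ω → Ω → ℝ) : ℝ :=
  ⨅ (e : {e : Ω ≃ᵐ Ω // MeasurePreserving e μ μ}),
    cutNorm μ (fun x y => W₁ x y - W₂ (e.1 x) (e.1 y))

/-- `W` is a graphon representation of the finite graph `G`. -/
def IsGraphonRep {V : Type*} [Fintype V] (μ : Measure Ω) (G : SimpleGraph V)
    (W : Ω → Ω → ℝ) : Prop :=
  ∃ P : V → Set Ω, (∀ v, MeasurableSet (P v)) ∧ Pairwise (Function.onFun Disjoint P) ∧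
    (∀ v, μ (P v) = 1 / (Fintype.card V : ℝ≥0∞)) ∧ (⋃ v, P v) = Set.univ ∧
    ∀ u v, ∀ᵐ p ∂(μ.prod μ), p.1 ∈ P u → p.2 ∈ P v →
      W p.1 p.2 = if G.Adj u v then 1 else 0

/-- The chromatic number of a graphon, as an extended natural number. -/
def graphonChrom (μ : Measure Ω) (W : Ω → Ω → ℝ) : ℕ∞ :=
  sInf ((↑) '' {k : ℕ | ∃ f : Ω → Fin k, Measurable f ∧ ∀ i, IsIndepSet μ W (f ⁻¹' {i})})

/-- A fractional coloring of a graphon. -/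
def IsFracColoring (μ : Measure Ω) (W : Ω → Ω → ℝ) (c : Set Ω → ℝ≥0∞) : Prop :=
  (∀ I, c I ≤ 1) ∧ (∀ I, ¬ IsIndepSet μ W I → c I = 0) ∧
    ∀ᵐ x ∂μ, 1 ≤ ∑' I : Set Ω, Set.indicator I (fun _ => c I) x

/-- The fractional chromatic number of a graphon. -/
def graphonFracChrom (μ : Measure Ω) (W : Ω → Ω → ℝ) : ℝ≥0∞ :=
  ⨅ (c : Set Ω → ℝ≥0∞) (_ : IsFracColoring μ W c), ∑' I : Set Ω, c I

/-- A fractional clique of a graphon. -/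
def IsFracClique (μ : Measure Ω) (W : Ω → Ω → ℝ) (f : Ω → ℝ≥0∞) : Prop :=
  Measurable f ∧ (∀ x, f x ≠ ∞) ∧ ∀ I, IsIndepSet μ W I → ∫⁻ x in I, f x ∂μ ≤ 1

/-- The fractional clique number of a graphon. -/
def graphonFracClique (μ : Measure Ω) (W : Ω → Ω → ℝ) : ℝ≥0∞ :=
  ⨆ (f : Ω → ℝ≥0∞) (_ : IsFracClique μ W f), ∫⁻ x, f x ∂μ

/-- The clique number of a graphon. -/
def graphonClique (μ : Measure Ω) (W : Ω → Ω → ℝ) : ℕ∞ :=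
  sSup ((↑) '' {r : ℕ | 0 < homDensity μ W (⊤ : SimpleGraph (Fin r))})

/-- Independent set of a finite simple graph. -/
def GraphIndep {V : Type*} (G : SimpleGraph V) (I : Set V) : Prop :=
  I.Pairwise fun u v => ¬ G.Adj u v

/-- Fractional chromatic number of a finite graph. -/
def fracChrom {V : Type*} [Fintype V] (G : SimpleGraph V) : ℝ≥0∞ :=
  ⨅ (c : Set V → ℝ≥0∞) (_ : (∀ I, c I ≤ 1) ∧ (∀ I, ¬ GraphIndep G I → c I = 0) ∧
      ∀ v, 1 ≤ ∑' I : Set V, Set.indicator I (fun _ => c I) v),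
    ∑' I : Set V, c I

/-- Fractional clique number of a finite graph. -/
def fracClique {V : Type*} [Fintype V] (G : SimpleGraph V) : ℝ≥0∞ :=
  ⨆ (f : V → ℝ≥0∞) (_ : ∀ I : Set V, GraphIndep G I → ∑' v : I, f v ≤ 1),
    ∑ v, f v

/-- The b-fold chromatic number of a graphon. -/
def bFoldChrom (μ : Measure Ω) (W : Ω → Ω → ℝ) (b : ℕ) : ℕ∞ :=
  sInf ((↑) '' {k : ℕ | ∃ p : Ω → Finset (Fin k),
    (∀ i, MeasurableSet {x | i ∈ p x}) ∧ (∀ x, (p x).card = b) ∧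
    ∀ᵐ q ∂(μ.prod μ), W q.1 q.2 = 0 ∨ p q.1 ∩ p q.2 = ∅})

/-- Membership in the weak* closure of the convex hull of indicators of
independent sets (the independent set polyton `IND(W)`). -/
def InIND (μ : Measure Ω) (W : Ω → Ω → ℝ) (f : Ω → ℝ) : Prop :=
  ∀ (ε : ℝ), 0 < ε → ∀ (m : ℕ) (g : Fin m → Ω → ℝ), (∀ i, Integrable (g i) μ) →
    ∃ (t : ℕ) (a : Fin t → ℝ) (I : Fin t → Set Ω),
      (∀ j, 0 ≤ a j) ∧ (∑ j, a j = 1) ∧ (∀ j, IsIndepSet μ W (I j)) ∧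
      ∀ i, |∫ x, ((∑ j, a j * Set.indicator (I j) 1 x) - f x) * g i x ∂μ| < ε

end

open MeasureTheory ENNReal Filter

theorem stmt_13 {Ω : Type*} [MeasurableSpace Ω] (μ : Measure Ω) [IsProbabilityMeasure μ]
    [NullSingletonClass μ] {W : Ω → Ω → ℝ} (hW : IsGraphon W)
    {V : Type*} [Fintype V] (G : SimpleGraph V) (hrep : IsGraphonRep μ G W) :
    fracClique G = graphonFracClique μ W := by
  classical
  obtain ⟨P, hPm, hPd, hPμ, hPu, hPadj⟩ := hrep
  have hV : Nonempty V := by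
    by_contra h
    rw [not_nonempty_iff] at h
    have h0 : (⋃ v, P v : Set Ω) = ∅ := by simp
    rw [h0] at hPu
    have h1 : μ (Set.univ : Set Ω) = 0 := by rw [← hPu]; simp
    simp [measure_univ] at h1
  have hn0 : ((Fintype.card V : ℕ) : ℝ≥0∞) ≠ 0 :=
    Nat.cast_ne_zero.2 Fintype.card_ne_zero
  have hntop : ((Fintype.card V : ℕ) : ℝ≥0∞) ≠ ∞ := natCast_ne_top _
  set n : ℝ≥0∞ := ((Fintype.card V : ℕ) : ℝ≥0∞) with hn
  -- independent sets of G give independent sets of W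
  have hindep : ∀ S : Set V, GraphIndep G S → IsIndepSet μ W (⋃ v ∈ S, P v) := by
    intro S hS
    refine ⟨MeasurableSet.biUnion (Set.to_countable S) (fun v _ => hPm v), ?_⟩
    have hae : ∀ᵐ p ∂(μ.prod μ), ∀ u v, p.1 ∈ P u → p.2 ∈ P v →
        W p.1 p.2 = if G.Adj u v then 1 else 0 := by
      rw [ae_all_iff]; intro u; rw [ae_all_iff]; intro v; exact hPadj u v
    filter_upwards [hae] with p hp h1 h2
    obtain ⟨u, hu, h1⟩ := Set.mem_iUnion₂.1 h1
    obtain ⟨v, hv, h2⟩ := Set.mem_iUnion₂.1 h2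
    have h := hp u v h1 h2
    rw [if_neg] at h
    · exact h
    · intro hadj
      rcases eq_or_ne u v with rfl | hne
      · exact G.loopless.irrefl u hadj
      · exact hS hu hv hne hadj
  apply le_antisymm
  · -- fracClique G ≤ graphonFracClique μ W
    refine iSup₂_le fun f hf => ?_
    have hf1 : ∀ v, f v ≤ 1 := fun v => by
      have h := hf ({v} : Set V) (Set.pairwise_singleton _ _)
      rw [← Finset.coe_singleton, Finset.tsum_subtype'] at h
      simpa using h
    set g : Ω → ℝ≥0∞ := fun x => ∑ v, Set.indicator (P v) (fun _ => n * f v) x with hg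
    have hgm : Measurable g :=
      Finset.measurable_sum _ fun v _ => measurable_const.indicator (hPm v)
    have hgint : ∀ I : Set Ω, MeasurableSet I →
        ∫⁻ x in I, g x ∂μ = ∑ v, n * f v * μ (P v ∩ I) := by
      intro I hI
      rw [hg]
      rw [lintegral_finset_sum _ (fun v _ => measurable_const.indicator (hPm v))]
      refine Finset.sum_congr rfl fun v _ => ?_
      rw [lintegral_indicator (hPm v), setLIntegral_const,
        Measure.restrict_apply (hPm v)]
    have hgfin : ∀ x, g x ≠ ∞ := by
      intro x
      refine (ENNReal.sum_lt_top.2 fun v _ => ?_).ne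
      refine lt_of_le_of_lt (Set.indicator_le_self _ _ x) ?_
      exact ENNReal.mul_lt_top hntop.lt_top ((hf1 v).trans_lt one_lt_top)
    have hclique : IsFracClique μ W g := by
      refine ⟨hgm, hgfin, ?_⟩
      rintro I ⟨hIm, hIae⟩
      rw [hgint I hIm]
      set S : Finset V := Finset.univ.filter (fun v => μ (P v ∩ I) ≠ 0) with hSdef
      have hsum : ∑ v, n * f v * μ (P v ∩ I) = ∑ v ∈ S, n * f v * μ (P v ∩ I) := by
        refine (Finset.sum_subset (Finset.subset_univ S) fun v _ hv => ?_).symm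
        have h0 : μ (P v ∩ I) = 0 := by
          by_contra h0
          exact hv (Finset.mem_filter.2 ⟨Finset.mem_univ v, h0⟩)
        rw [h0, mul_zero]
      have hSind : GraphIndep G (↑S : Set V) := by
        intro u hu v hv hne hadj
        have hu' : μ (P u ∩ I) ≠ 0 := (Finset.mem_filter.1 hu).2
        have hv' : μ (P v ∩ I) ≠ 0 := (Finset.mem_filter.1 hv).2
        have hpos : (μ.prod μ) ((P u ∩ I) ×ˢ (P v ∩ I)) ≠ 0 := by
          rw [Measure.prod_prod]; exact mul_ne_zero hu' hv'
        have hnull := ae_iff.1 ((hPadj u v).and hIae)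
        apply hpos
        refine measure_mono_null (fun p hp => ?_) hnull
        rintro ⟨hA, hB⟩
        obtain ⟨⟨hp1u, hp1I⟩, hp2v, hp2I⟩ := hp
        have h1 := hA hp1u hp2v
        rw [if_pos hadj] at h1
        rw [hB hp1I hp2I] at h1
        exact one_ne_zero h1.symm
      rw [hsum]
      calc ∑ v ∈ S, n * f v * μ (P v ∩ I) ≤ ∑ v ∈ S, f v := by
            refine Finset.sum_le_sum fun v _ => ?_
            have hle : μ (P v ∩ I) ≤ 1 / n := by
              rw [← hPμ v]; exact measure_mono Set.inter_subset_left
            calc n * f v * μ (P v ∩ I) ≤ n * f v * (1 / n) :=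
                  mul_le_mul_right hle _
              _ = f v := by
                  rw [one_div, mul_comm n (f v), mul_assoc,
                    ENNReal.mul_inv_cancel hn0 hntop, mul_one]
        _ ≤ 1 := by
            have h := hf (↑S : Set V) hSind
            rwa [Finset.tsum_subtype' S f] at h
    have htot : ∑ v, f v = ∫⁻ x, g x ∂μ := by
      rw [← setLIntegral_univ, hgint _ MeasurableSet.univ]
      refine Finset.sum_congr rfl fun v _ => ?_
      rw [Set.inter_univ, hPμ v, one_div, mul_comm n (f v), mul_assoc,
        ENNReal.mul_inv_cancel hn0 hntop, mul_one]
    rw [htot]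
    exact le_iSup₂ (f := fun (g : Ω → ℝ≥0∞) (_ : IsFracClique μ W g) => ∫⁻ x, g x ∂μ) g hclique
  · -- graphonFracClique μ W ≤ fracClique G
    refine iSup₂_le fun g hg => ?_
    obtain ⟨hgm, hgfin, hgI⟩ := hg
    set f : V → ℝ≥0∞ := fun v => ∫⁻ x in P v, g x ∂μ with hfdef
    have hdisj : ∀ (T : Set V), Pairwise (Function.onFun Disjoint fun v : T => P ↑v) :=
      fun T i j hij => hPd (Subtype.coe_injective.ne hij)
    have hcond : ∀ I : Set V, GraphIndep G I → ∑' v : I, f v ≤ 1 := by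
      intro S hS
      have hU := hindep S hS
      have hcalc : ∑' v : S, f v = ∫⁻ x in ⋃ v ∈ S, P v, g x ∂μ := by
        rw [Set.biUnion_eq_iUnion, lintegral_iUnion (fun v : S => hPm v) (hdisj S) g]
      rw [hcalc]
      exact hgI _ hU
    have htot : ∫⁻ x, g x ∂μ = ∑ v, f v := by
      rw [← setLIntegral_univ, ← hPu, lintegral_iUnion hPm hPd g, tsum_fintype]
    rw [htot]
    exact le_iSup₂ (f := fun (f : V → ℝ≥0∞)
      (_ : ∀ I : Set V, GraphIndep G I → ∑' v : I, f v ≤ 1) => ∑ v, f v) f hcond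
end

section
/- Let (Wₙ) be a sequence of graphons converging to W in cut-norm. Then ω_frac(W) ≤ liminfₙ ω_frac(Wₙ). (Lower semicontinuity of the fractional clique number.) -/
open MeasureTheory ENNReal Filter
open scoped Classical

open MeasureTheory ENNReal Filter

open scoped Topology NNReal

namespace FracCliqueLSC

noncomputable def UF : Ultrafilter ℕ := Filter.hyperfilter ℕ

lemma UF_le_atTop : (UF : Filter ℕ) ≤ atTop := by
  simpa [UF, Nat.cofinite_eq_atTop] using (Filter.hyperfilter_le_cofinite (α := ℕ))

lemma exists_ulim (s : ℕ → ℝ≥0∞) : ∃ a, Tendsto s (UF : Filter ℕ) (𝓝 a) := by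
  rcases isCompact_univ.ultrafilter_le_nhds (UF.map s) (by simp) with ⟨a, -, ha⟩
  exact ⟨a, ha⟩

noncomputable def ulim (s : ℕ → ℝ≥0∞) : ℝ≥0∞ := (exists_ulim s).choose

lemma tendsto_ulim (s : ℕ → ℝ≥0∞) : Tendsto s (UF : Filter ℕ) (𝓝 (ulim s)) :=
  (exists_ulim s).choose_spec

lemma ulim_eq {s : ℕ → ℝ≥0∞} {a : ℝ≥0∞} (h : Tendsto s (UF : Filter ℕ) (𝓝 a)) : ulim s = a :=
  tendsto_nhds_unique (tendsto_ulim s) h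

lemma le_of_le_add_tendsto_zero {a L : ℝ≥0∞} (T : ℕ → ℝ≥0∞) (h : ∀ N, a ≤ L + T N)
    (hT : Tendsto T atTop (𝓝 0)) : a ≤ L := by
  refine ENNReal.le_of_forall_pos_le_add fun ε hε hL => ?_
  obtain ⟨N, hN⟩ := (ENNReal.tendsto_atTop_zero.mp hT) ε (by exact_mod_cast hε.bot_lt)
  exact (h N).trans (add_le_add le_rfl (hN N le_rfl))

lemma tsum_le_sum_range_add (f : ℕ → ℝ≥0∞) (N : ℕ) :
    ∑' i, f i ≤ ∑ i ∈ Finset.range N, f i + ∑' i, f (i + N) := by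
  rw [ENNReal.tsum_eq_iSup_nat]
  refine iSup_le fun n => ?_
  rcases le_total n N with h | h
  · exact le_add_right (Finset.sum_le_sum_of_subset (Finset.range_mono h))
  · obtain ⟨m, rfl⟩ := Nat.exists_eq_add_of_le h
    rw [Finset.sum_range_add]
    refine add_le_add le_rfl ?_
    refine le_trans ?_ (ENNReal.sum_le_tsum (f := fun i => f (i + N)) (Finset.range m))
    exact le_of_eq (Finset.sum_congr rfl fun i _ => by rw [Nat.add_comm])

lemma tendsto_tsum (a : ℕ → ℕ → ℝ≥0∞) (L m : ℕ → ℝ≥0∞)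
    (hb : ∀ i k, a i k ≤ m i) (hm : ∑' i, m i ≠ ∞)
    (hL : ∀ i, Tendsto (fun k => a i k) (UF : Filter ℕ) (𝓝 (L i))) :
    Tendsto (fun k => ∑' i, a i k) (UF : Filter ℕ) (𝓝 (∑' i, L i)) := by
  obtain ⟨A, hA⟩ := exists_ulim (fun k => ∑' i, a i k)
  suffices hAL : A = ∑' i, L i by rwa [hAL] at hA
  have hge : ∑' i, L i ≤ A := by
    rw [ENNReal.tsum_eq_iSup_nat]
    refine iSup_le fun N => ?_
    have h1 : Tendsto (fun k => ∑ i ∈ Finset.range N, a i k) (UF : Filter ℕ)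
        (𝓝 (∑ i ∈ Finset.range N, L i)) := tendsto_finset_sum _ fun i _ => hL i
    exact le_of_tendsto_of_tendsto' h1 hA fun k => ENNReal.sum_le_tsum _
  have hle : ∀ N, A ≤ ∑' i, L i + ∑' i, m (i + N) := by
    intro N
    have h1 : Tendsto (fun k => ∑ i ∈ Finset.range N, a i k + ∑' i, m (i + N)) (UF : Filter ℕ)
        (𝓝 (∑ i ∈ Finset.range N, L i + ∑' i, m (i + N))) :=
      (tendsto_finset_sum _ fun i _ => hL i).add tendsto_const_nhds
    refine le_trans (le_of_tendsto_of_tendsto' hA h1 fun k => ?_) ?_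
    · exact (tsum_le_sum_range_add (fun i => a i k) N).trans
        (add_le_add le_rfl (ENNReal.tsum_le_tsum fun i => hb _ _))
    · exact add_le_add (ENNReal.sum_le_tsum _) le_rfl
  exact le_antisymm (le_of_le_add_tendsto_zero _ hle (ENNReal.tendsto_sum_nat_add m hm)) hge


section Density

variable {Ω : Type*} [MeasurableSpace Ω]

lemma exists_density (μ : Measure Ω) [IsFiniteMeasure μ] (I : ℕ → Set Ω)
    (hI : ∀ k, MeasurableSet (I k)) :
    ∃ g : Ω → ℝ≥0∞, Measurable g ∧ g ≤ᵐ[μ] 1 ∧ μ.withDensity g ≤ μ ∧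
      ∀ A, MeasurableSet A →
        Tendsto (fun k => μ (A ∩ I k)) (UF : Filter ℕ) (𝓝 (μ.withDensity g A)) := by
  have h0 : ulim (fun k => μ (∅ ∩ I k)) = 0 := by
    simpa using ulim_eq (s := fun k => μ (∅ ∩ I k)) (a := 0)
      (by simpa using (tendsto_const_nhds : Tendsto (fun _ : ℕ => (0:ℝ≥0∞)) _ _))
  set ν₀ : Measure Ω := Measure.ofMeasurable (fun A _ => ulim (fun k => μ (A ∩ I k))) h0
    (by
      intro f hf hdisj
      have hrw : ∀ k, μ ((⋃ i, f i) ∩ I k) = ∑' i, μ (f i ∩ I k) := by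
        intro k
        rw [Set.iUnion_inter]
        exact measure_iUnion
          (hdisj.mono fun i j h => h.mono Set.inter_subset_left Set.inter_subset_left)
          (fun i => (hf i).inter (hI k))
      have := tendsto_tsum (fun i k => μ (f i ∩ I k)) (fun i => ulim (fun k => μ (f i ∩ I k)))
        (fun i => μ (f i)) (fun i k => measure_mono Set.inter_subset_left)
        (by rw [← measure_iUnion hdisj hf]; exact measure_ne_top μ _)
        (fun i => tendsto_ulim _)
      refine ulim_eq ?_
      simpa only [← hrw] using this) with hν₀def
  have hν₀app : ∀ A, MeasurableSet A → ν₀ A = ulim (fun k => μ (A ∩ I k)) := by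
    intro A hA; exact Measure.ofMeasurable_apply A hA
  have hle : ν₀ ≤ μ := by
    refine Measure.le_iff.2 fun A hA => ?_
    rw [hν₀app A hA]
    exact le_of_tendsto (tendsto_ulim _)
      (Eventually.of_forall fun k => measure_mono Set.inter_subset_left)
  haveI : IsFiniteMeasure ν₀ := isFiniteMeasure_of_le μ hle
  have hac : ν₀ ≪ μ := Measure.absolutelyContinuous_of_le hle
  refine ⟨ν₀.rnDeriv μ, Measure.measurable_rnDeriv _ _, Measure.rnDeriv_le_one_of_le hle, ?_, ?_⟩
  · rw [Measure.withDensity_rnDeriv_eq ν₀ μ hac]; exact hle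
  · intro A hA
    rw [Measure.withDensity_rnDeriv_eq ν₀ μ hac, hν₀app A hA]
    exact tendsto_ulim _

end Density

section Transfer

variable {α : Type*} [MeasurableSpace α]

lemma tendsto_simpleFunc_lintegral (ρ τ : Measure α) (K : ℕ → Set α)
    (hK : ∀ k, MeasurableSet (K k))
    (hA : ∀ A, MeasurableSet A →
      Tendsto (fun k => ρ (A ∩ K k)) (UF : Filter ℕ) (𝓝 (τ A)))
    (hτfin : ∀ A, τ A ≠ ∞)
    (φ : SimpleFunc α ℝ≥0∞) (hφ : ∀ x, φ x ≠ ∞) :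
    Tendsto (fun k => ∫⁻ x in K k, φ x ∂ρ) (UF : Filter ℕ) (𝓝 (∫⁻ x, φ x ∂τ)) := by
  have h1 : ∀ k, ∫⁻ x in K k, φ x ∂ρ
      = ∑ c ∈ φ.range, c * ρ (φ ⁻¹' {c} ∩ K k) := by
    intro k
    rw [SimpleFunc.lintegral_eq_lintegral, SimpleFunc.lintegral]
    exact Finset.sum_congr rfl fun c _ => by
      rw [Measure.restrict_apply (φ.measurableSet_preimage _)]
  have h2 : ∫⁻ x, φ x ∂τ = ∑ c ∈ φ.range, c * τ (φ ⁻¹' {c}) := by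
    rw [SimpleFunc.lintegral_eq_lintegral]; rfl
  simp only [h1, h2]
  refine tendsto_finset_sum _ fun c hc => ?_
  have hcne : c ≠ ∞ := by
    obtain ⟨x, hx⟩ := SimpleFunc.mem_range.1 hc
    exact hx ▸ hφ x
  exact ENNReal.Tendsto.const_mul (hA _ (φ.measurableSet_preimage _))
    (Or.inr hcne)

lemma tendsto_eapprox_error (ρ : Measure α) (h : α → ℝ≥0∞) (hh : Measurable h)
    (hfin : ∫⁻ x, h x ∂ρ ≠ ∞) :
    Tendsto (fun n => ∫⁻ x, (h x - SimpleFunc.eapprox h n x) ∂ρ) atTop (𝓝 0) := by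
  have hmono : Monotone fun n => (SimpleFunc.eapprox h n : α → ℝ≥0∞) :=
    fun i j hij x => SimpleFunc.monotone_eapprox h hij x
  have hlim : Tendsto (fun n => ∫⁻ x, SimpleFunc.eapprox h n x ∂ρ) atTop
      (𝓝 (∫⁻ x, h x ∂ρ)) := by
    have h1 := lintegral_iSup (μ := ρ) (fun n => (SimpleFunc.eapprox h n).measurable) hmono
    have heq : ∫⁻ x, ⨆ n, SimpleFunc.eapprox h n x ∂ρ = ∫⁻ x, h x ∂ρ :=
      lintegral_congr fun x => by rw [SimpleFunc.iSup_eapprox_apply hh]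
    rw [heq] at h1
    rw [h1]
    exact tendsto_atTop_iSup (fun i j hij => lintegral_mono fun x => hmono hij x)
  have hle : ∀ n x, SimpleFunc.eapprox h n x ≤ h x := fun n x =>
    (le_iSup (fun n => SimpleFunc.eapprox h n x) n).trans
      (le_of_eq (SimpleFunc.iSup_eapprox_apply hh x))
  have hsub : ∀ n, ∫⁻ x, (h x - SimpleFunc.eapprox h n x) ∂ρ
      = ∫⁻ x, h x ∂ρ - ∫⁻ x, SimpleFunc.eapprox h n x ∂ρ := fun n =>
    lintegral_sub (SimpleFunc.eapprox h n).measurable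
      (ne_top_of_le_ne_top hfin (lintegral_mono (hle n)))
      (Eventually.of_forall (hle n))
  simp only [hsub]
  have : Tendsto (fun n => ∫⁻ x, h x ∂ρ - ∫⁻ x, SimpleFunc.eapprox h n x ∂ρ) atTop
      (𝓝 (∫⁻ x, h x ∂ρ - ∫⁻ x, h x ∂ρ)) :=
    ENNReal.Tendsto.sub tendsto_const_nhds hlim (Or.inl hfin)
  simpa [tsub_self] using this

lemma le_lintegral_limit (ρ τ : Measure α) (K : ℕ → Set α)
    (hK : ∀ k, MeasurableSet (K k))
    (hA : ∀ A, MeasurableSet A →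
      Tendsto (fun k => ρ (A ∩ K k)) (UF : Filter ℕ) (𝓝 (τ A)))
    (hτfin : ∀ A, τ A ≠ ∞)
    (h : α → ℝ≥0∞) (hh : Measurable h) (hfin : ∫⁻ x, h x ∂ρ ≠ ∞)
    (t : ℝ≥0∞) (ht : ∀ k, t ≤ ∫⁻ x in K k, h x ∂ρ) :
    t ≤ ∫⁻ x, h x ∂τ := by
  rcases eq_top_or_lt_top (∫⁻ x, h x ∂τ) with htop | htop
  · exact htop ▸ le_top
  refine ENNReal.le_of_forall_pos_le_add fun ε hε _ => ?_
  have hε' : (0:ℝ≥0∞) < ε := by exact_mod_cast hε.bot_lt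
  obtain ⟨n, hn⟩ := ((ENNReal.tendsto_atTop_zero.mp
    (tendsto_eapprox_error ρ h hh hfin)) ε hε')
  set φ := SimpleFunc.eapprox h n with hφdef
  have hφle : ∀ x, φ x ≤ h x := fun x =>
    (le_iSup (fun n => SimpleFunc.eapprox h n x) n).trans
      (le_of_eq (SimpleFunc.iSup_eapprox_apply hh x))
  have herr : ∫⁻ x, (h x - φ x) ∂ρ ≤ ε := hn n le_rfl
  have hkey : ∀ k, t ≤ ∫⁻ x in K k, φ x ∂ρ + ε := by
    intro k
    refine (ht k).trans ?_
    have : ∫⁻ x in K k, h x ∂ρ ≤ ∫⁻ x in K k, (φ x + (h x - φ x)) ∂ρ :=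
      lintegral_mono fun x => by
        rw [add_comm, tsub_add_cancel_of_le (hφle x)]
    refine this.trans ?_
    rw [lintegral_add_left φ.measurable]
    exact add_le_add le_rfl ((lintegral_mono' Measure.restrict_le_self le_rfl).trans herr)
  have hlim := tendsto_simpleFunc_lintegral ρ τ K hK hA hτfin φ
    (fun x => (SimpleFunc.eapprox_lt_top h n x).ne)
  have h2 : t ≤ ∫⁻ x, φ x ∂τ + ε :=
    ge_of_tendsto (hlim.add tendsto_const_nhds) (Eventually.of_forall hkey)
  exact h2.trans (add_le_add (lintegral_mono hφle) le_rfl)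

lemma lintegral_limit_zero (ρ τ : Measure α) (K : ℕ → Set α)
    (hK : ∀ k, MeasurableSet (K k))
    (hA : ∀ A, MeasurableSet A →
      Tendsto (fun k => ρ (A ∩ K k)) (UF : Filter ℕ) (𝓝 (τ A)))
    (hτfin : ∀ A, τ A ≠ ∞) (hle : τ ≤ ρ)
    (h : α → ℝ≥0∞) (hh : Measurable h) (hfin : ∫⁻ x, h x ∂ρ ≠ ∞)
    (hq : Tendsto (fun k => ∫⁻ x in K k, h x ∂ρ) atTop (𝓝 0)) :
    ∫⁻ x, h x ∂τ = 0 := by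
  refine le_antisymm ?_ zero_le
  have key : ∀ ε : ℝ≥0, 0 < ε → ∫⁻ x, h x ∂τ ≤ ε := by
    intro ε hε
    have hε' : (0:ℝ≥0∞) < ε := by exact_mod_cast hε.bot_lt
    obtain ⟨n, hn⟩ := ((ENNReal.tendsto_atTop_zero.mp
      (tendsto_eapprox_error ρ h hh hfin)) ε hε')
    set φ := SimpleFunc.eapprox h n with hφdef
    have hφle : ∀ x, φ x ≤ h x := fun x =>
      (le_iSup (fun n => SimpleFunc.eapprox h n x) n).trans
        (le_of_eq (SimpleFunc.iSup_eapprox_apply hh x))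
    have herr : ∫⁻ x, (h x - φ x) ∂ρ ≤ ε := hn n le_rfl
    have h1 : ∫⁻ x, h x ∂τ ≤ ∫⁻ x, φ x ∂τ + ∫⁻ x, (h x - φ x) ∂τ := by
      rw [← lintegral_add_left φ.measurable]
      exact lintegral_mono fun x => by
        rw [add_comm, tsub_add_cancel_of_le (hφle x)]
    have h2 : ∫⁻ x, (h x - φ x) ∂τ ≤ ε :=
      (lintegral_mono' hle le_rfl).trans herr
    have hlim := tendsto_simpleFunc_lintegral ρ τ K hK hA hτfin φ
      (fun x => (SimpleFunc.eapprox_lt_top h n x).ne)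
    have h3 : ∫⁻ x, φ x ∂τ ≤ 0 :=
      le_of_tendsto_of_tendsto' hlim (hq.mono_left UF_le_atTop)
        (fun k => lintegral_mono fun x => hφle x)
    calc ∫⁻ x, h x ∂τ ≤ ∫⁻ x, φ x ∂τ + ∫⁻ x, (h x - φ x) ∂τ := h1
      _ ≤ 0 + ε := add_le_add h3 h2
      _ = ε := by rw [zero_add]
  refine ENNReal.le_of_forall_pos_le_add fun ε hε _ => ?_
  exact le_trans (key ε hε) (by rw [zero_add])


end Transfer
section ProdLimit

variable {Ω : Type*} [MeasurableSpace Ω]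

lemma prod_density_facts (μ : Measure Ω) [IsProbabilityMeasure μ]
    (I : ℕ → Set Ω) (hI : ∀ k, MeasurableSet (I k))
    (g : Ω → ℝ≥0∞) (hg : Measurable g) (hg1 : g ≤ᵐ[μ] 1)
    (hgA : ∀ A, MeasurableSet A →
      Tendsto (fun k => μ (A ∩ I k)) (UF : Filter ℕ) (𝓝 (μ.withDensity g A))) :
    (((μ.prod μ).withDensity fun p => g p.1 * g p.2) ≤ μ.prod μ) ∧
    (∀ C, MeasurableSet C → Tendsto (fun k => (μ.prod μ) (C ∩ (I k ×ˢ I k))) (UF : Filter ℕ)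
      (𝓝 (((μ.prod μ).withDensity fun p => g p.1 * g p.2) C))) := by
  set ν := μ.withDensity g with hνdef
  set τ := (μ.prod μ).withDensity fun p => g p.1 * g p.2 with hτdef
  have hggm : Measurable fun p : Ω × Ω => g p.1 * g p.2 :=
    (hg.comp measurable_fst).mul (hg.comp measurable_snd)
  have hgg_ae : (fun p : Ω × Ω => g p.1 * g p.2) ≤ᵐ[μ.prod μ] 1 := by
    set N := {x | 1 < g x} with hNdef
    have hNmeas : MeasurableSet N := measurableSet_lt measurable_const hg
    have hN : μ N = 0 := by
      have hg1' : ∀ᵐ x ∂μ, g x ≤ 1 := hg1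
      rw [ae_iff] at hg1'
      simpa only [hNdef, not_le] using hg1'
    have hBad : (μ.prod μ) ((N ×ˢ (Set.univ : Set Ω)) ∪ ((Set.univ : Set Ω) ×ˢ N)) = 0 :=
      measure_union_null (by rw [Measure.prod_prod, hN, zero_mul])
        (by rw [Measure.prod_prod, hN, mul_zero])
    refine measure_mono_null ?_ hBad
    intro p hp
    by_contra hcon
    simp only [Set.mem_union, Set.mem_prod, Set.mem_univ, and_true, true_and,
      not_or] at hcon
    have h1 : g p.1 ≤ 1 := not_lt.1 (by simpa [hNdef] using hcon.1)
    have h2 : g p.2 ≤ 1 := not_lt.1 (by simpa [hNdef] using hcon.2)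
    exact hp (mul_le_one' h1 h2)
  have hτle : τ ≤ μ.prod μ := by
    refine Measure.le_iff.2 fun C hC => ?_
    rw [hτdef, withDensity_apply _ hC]
    calc ∫⁻ p in C, g p.1 * g p.2 ∂μ.prod μ
        ≤ ∫⁻ p in C, 1 ∂μ.prod μ :=
          lintegral_mono_ae (ae_restrict_of_ae hgg_ae)
      _ = (μ.prod μ) C := by simp
  have hνle : ν ≤ μ := by
    refine Measure.le_iff.2 fun A hA => ?_
    rw [hνdef, withDensity_apply _ hA]
    calc ∫⁻ x in A, g x ∂μ ≤ ∫⁻ x in A, 1 ∂μ :=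
          lintegral_mono_ae (ae_restrict_of_ae hg1)
      _ = μ A := by simp
  have hνfin : ∀ A, ν A ≠ ∞ := fun A =>
    (lt_of_le_of_lt (le_trans (hνle A) (measure_mono (Set.subset_univ A)))
      (measure_lt_top μ _)).ne
  have hrect : ∀ s t : Set Ω, MeasurableSet s → MeasurableSet t →
      τ (s ×ˢ t) = ν s * ν t := by
    intro s t hs ht
    rw [hτdef, withDensity_apply _ (hs.prod ht), ← Measure.prod_restrict,
      lintegral_prod_mul hg.aemeasurable hg.aemeasurable,
      hνdef, withDensity_apply _ hs, withDensity_apply _ ht]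
  refine ⟨hτle, ?_⟩
  have huniv : Tendsto (fun k => (μ.prod μ) (I k ×ˢ I k)) (UF : Filter ℕ) (𝓝 (τ Set.univ)) := by
    have : τ Set.univ = ν Set.univ * ν Set.univ := by
      rw [← Set.univ_prod_univ]
      exact hrect _ _ MeasurableSet.univ MeasurableSet.univ
    rw [this]
    have h1 := hgA Set.univ MeasurableSet.univ
    simp only [Set.univ_inter] at h1
    have := ENNReal.Tendsto.mul h1 (Or.inr (hνfin _)) h1 (Or.inr (hνfin _))
    simpa only [Measure.prod_prod] using this
  intro C hC
  refine MeasurableSpace.induction_on_inter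
    (C := fun C _ => Tendsto (fun k => (μ.prod μ) (C ∩ (I k ×ˢ I k))) (UF : Filter ℕ) (𝓝 (τ C)))
    generateFrom_prod.symm isPiSystem_prod ?_ (fun u hu => ?_)
    (fun C hCm hC' => ?_) (fun f hdisj hfm hf => ?_) C hC
  · simpa using (tendsto_const_nhds : Tendsto (fun _ : ℕ => (0:ℝ≥0∞)) _ _)
  · obtain ⟨s, hs, t, ht, rfl⟩ := hu
    simp only [Set.mem_setOf_eq] at hs ht
    have hres : ∀ k, (s ×ˢ t) ∩ (I k ×ˢ I k) = (s ∩ I k) ×ˢ (t ∩ I k) := fun k =>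
      Set.prod_inter_prod
    simp only [hres, Measure.prod_prod, hrect s t hs ht]
    exact ENNReal.Tendsto.mul (hgA s hs) (Or.inr (hνfin _)) (hgA t ht) (Or.inr (hνfin _))
  · have hdiff : ∀ k, Cᶜ ∩ (I k ×ˢ I k) = (I k ×ˢ I k) \ (C ∩ (I k ×ˢ I k)) := by
      intro k; ext p; simp only [Set.mem_inter_iff, Set.mem_compl_iff, Set.mem_diff]; tauto
    have hmeq : ∀ k, (μ.prod μ) (Cᶜ ∩ (I k ×ˢ I k))
        = (μ.prod μ) (I k ×ˢ I k) - (μ.prod μ) (C ∩ (I k ×ˢ I k)) := by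
      intro k
      rw [hdiff k]
      exact measure_diff Set.inter_subset_right
        ((hCm.inter ((hI k).prod (hI k))).nullMeasurableSet)
        (measure_ne_top _ _)
    have hτcompl : τ Cᶜ = τ Set.univ - τ C := by
      rw [measure_compl hCm ((lt_of_le_of_lt (le_trans (hτle C)
        (measure_mono (Set.subset_univ C))) (measure_lt_top _ _)).ne)]
    simp only [hmeq, hτcompl]
    exact ENNReal.Tendsto.sub huniv hC'
      (Or.inl ((lt_of_le_of_lt (le_trans (hτle Set.univ) le_rfl)
        (measure_lt_top _ _)).ne))
  · have hrw : ∀ k, (μ.prod μ) ((⋃ i, f i) ∩ (I k ×ˢ I k))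
        = ∑' i, (μ.prod μ) (f i ∩ (I k ×ˢ I k)) := by
      intro k
      rw [Set.iUnion_inter]
      exact measure_iUnion
        (hdisj.mono fun i j h => h.mono Set.inter_subset_left Set.inter_subset_left)
        (fun i => (hfm i).inter ((hI k).prod (hI k)))
    have hτU : τ (⋃ i, f i) = ∑' i, τ (f i) := measure_iUnion hdisj hfm
    simp only [hrw, hτU]
    exact tendsto_tsum _ _ (fun i => (μ.prod μ) (f i))
      (fun i k => measure_mono Set.inter_subset_left)
      (by rw [← measure_iUnion hdisj hfm]; exact measure_ne_top _ _)
      (fun i => hf i)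

end ProdLimit

section Stability

variable {Ω : Type*} [MeasurableSpace Ω]

lemma stability (μ : Measure Ω) [IsProbabilityMeasure μ]
    {W : Ω → Ω → ℝ} (hW : IsGraphon W) (f : Ω → ℝ≥0∞) (hfm : Measurable f)
    (M : ℝ≥0∞) (hM : M ≠ ∞) (hfM : ∀ x, f x ≤ M)
    (hf : ∀ I, IsIndepSet μ W I → ∫⁻ x in I, f x ∂μ ≤ 1)
    (t : ℝ≥0∞) (ht : 1 < t) :
    ∃ ε : ℝ≥0∞, 0 < ε ∧ ∀ I, MeasurableSet I →
      (∫⁻ p in I ×ˢ I, ENNReal.ofReal (W p.1 p.2) ∂(μ.prod μ)) ≤ ε →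
      ∫⁻ x in I, f x ∂μ ≤ t := by
  by_contra hcon
  push_neg at hcon
  choose! I hImeas hIE hIf using fun k : ℕ =>
    hcon ((k : ℝ≥0∞))⁻¹ (ENNReal.inv_pos.mpr (ENNReal.natCast_ne_top k))
  set WE : Ω × Ω → ℝ≥0∞ := fun p => ENNReal.ofReal (W p.1 p.2) with hWEdef
  have hWEm : Measurable WE := ENNReal.measurable_ofReal.comp hW.1
  have hWE1 : ∀ p, WE p ≤ 1 := fun p => ENNReal.ofReal_le_one.2 (hW.2.2 p.1 p.2).2
  obtain ⟨g, hg, hg1, hνle, hgA⟩ := exists_density μ I hImeas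
  have hggm : Measurable fun p : Ω × Ω => g p.1 * g p.2 :=
    (hg.comp measurable_fst).mul (hg.comp measurable_snd)
  have hE0 : Tendsto (fun k => ∫⁻ p in I k ×ˢ I k, WE p ∂(μ.prod μ)) atTop (𝓝 0) :=
    tendsto_of_tendsto_of_tendsto_of_le_of_le tendsto_const_nhds
      ENNReal.tendsto_inv_nat_nhds_zero (fun k => zero_le) hIE
  obtain ⟨hτle, hτA⟩ := prod_density_facts μ I hImeas g hg hg1 hgA
  set τ := (μ.prod μ).withDensity fun p => g p.1 * g p.2 with hτdef
  have hνfin : ∀ A, μ.withDensity g A ≠ ∞ := fun A =>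
    (lt_of_le_of_lt (le_trans (hνle A) (measure_mono (Set.subset_univ A)))
      (measure_lt_top μ _)).ne
  have hτfin : ∀ C, τ C ≠ ∞ := fun C =>
    (lt_of_le_of_lt (le_trans (hτle C) (measure_mono (Set.subset_univ C)))
      (measure_lt_top _ _)).ne
  have hfint : ∫⁻ x, f x ∂μ ≠ ∞ := by
    refine (lt_of_le_of_lt (lintegral_mono hfM) ?_).ne
    rw [lintegral_const, measure_univ, mul_one]
    exact hM.lt_top
  have ht1 : t ≤ ∫⁻ x, f x ∂(μ.withDensity g) :=
    le_lintegral_limit μ (μ.withDensity g) I hImeas hgA hνfin f hfm hfint t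
      (fun k => (hIf k).le)
  have hWEfin : ∫⁻ p, WE p ∂(μ.prod μ) ≠ ∞ := by
    refine (lt_of_le_of_lt (lintegral_mono hWE1) ?_).ne
    rw [lintegral_const, measure_univ, mul_one]
    exact one_lt_top
  have hQ0 : ∫⁻ p, WE p ∂τ = 0 :=
    lintegral_limit_zero (μ.prod μ) τ (fun k => I k ×ˢ I k)
      (fun k => (hImeas k).prod (hImeas k)) hτA hτfin hτle WE hWEm hWEfin hE0
  rw [hτdef, lintegral_withDensity_eq_lintegral_mul (μ.prod μ) hggm hWEm] at hQ0
  have hae := (lintegral_eq_zero_iff (hggm.mul hWEm)).1 hQ0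
  set S := {x | g x ≠ 0} with hSdef
  have hSmeas : MeasurableSet S := (hg (measurableSet_singleton 0)).compl
  have hSind : IsIndepSet μ W S := by
    refine ⟨hSmeas, ?_⟩
    filter_upwards [hae] with p hp h1 h2
    have hp' : g p.1 * g p.2 * WE p = 0 := hp
    have h1' : g p.1 ≠ 0 := h1
    have h2' : g p.2 ≠ 0 := h2
    have hWE0 : WE p = 0 := by
      rcases mul_eq_zero.1 hp' with h | h
      · rcases mul_eq_zero.1 h with h' | h'
        · exact absurd h' h1'
        · exact absurd h' h2'
      · exact h
    have hle0 : W p.1 p.2 ≤ 0 := ENNReal.ofReal_eq_zero.1 hWE0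
    exact le_antisymm hle0 (hW.2.2 p.1 p.2).1
  have hS1 : ∫⁻ x in S, f x ∂μ ≤ 1 := hf S hSind
  have hν_le_S : ∫⁻ x, f x ∂(μ.withDensity g) ≤ ∫⁻ x in S, f x ∂μ := by
    rw [lintegral_withDensity_eq_lintegral_mul μ hg hfm, ← lintegral_indicator hSmeas]
    refine lintegral_mono_ae ?_
    filter_upwards [hg1] with x hx
    by_cases hxS : x ∈ S
    · rw [Set.indicator_of_mem hxS]
      calc g x * f x ≤ 1 * f x := mul_le_mul_left hx (f x)
        _ = f x := one_mul _
    · have hgx : g x = 0 := not_not.1 hxS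
      simp [Pi.mul_apply, hgx, Set.indicator_of_notMem hxS]
  exact absurd (ht1.trans (hν_le_S.trans hS1)) (not_le.2 ht)

end Stability

section CutNormBridge

variable {Ω : Type*} [MeasurableSpace Ω]

lemma graphon_integrable (μ : Measure Ω) [IsProbabilityMeasure μ]
    {W : Ω → Ω → ℝ} (hW : IsGraphon W) (ρ : Measure (Ω × Ω)) [IsFiniteMeasure ρ] :
    Integrable (fun p : Ω × Ω => W p.1 p.2) ρ := by
  refine Integrable.mono' (integrable_const 1) hW.1.aestronglyMeasurable ?_
  refine Eventually.of_forall fun p => ?_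
  rw [Real.norm_eq_abs, abs_le]
  exact ⟨by linarith [(hW.2.2 p.1 p.2).1], (hW.2.2 p.1 p.2).2⟩

lemma lintegral_indep_le_cutNorm (μ : Measure Ω) [IsProbabilityMeasure μ]
    {W V : Ω → Ω → ℝ} (hW : IsGraphon W) (hV : IsGraphon V)
    {I : Set Ω} (hInd : IsIndepSet μ V I) :
    ∫⁻ p in I ×ˢ I, ENNReal.ofReal (W p.1 p.2) ∂(μ.prod μ)
      ≤ ENNReal.ofReal (cutNorm μ (fun x y => V x y - W x y)) := by
  have hImeas : MeasurableSet I := hInd.1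
  have hsub : ∀ (s : Set (Ω × Ω)), Integrable
      (fun p : Ω × Ω => V p.1 p.2 - W p.1 p.2) ((μ.prod μ).restrict s) := fun s =>
    (graphon_integrable μ hV _).sub (graphon_integrable μ hW _)
  -- the V-integral over I × I vanishes
  have hV0 : ∫ p in I ×ˢ I, V p.1 p.2 ∂(μ.prod μ) = 0 := by
    refine integral_eq_zero_of_ae ?_
    filter_upwards [ae_restrict_of_ae hInd.2, ae_restrict_mem (hImeas.prod hImeas)]
      with p h hm
    exact h hm.1 hm.2
  have hWV : ∫ p in I ×ˢ I, W p.1 p.2 ∂(μ.prod μ)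
      = -∫ p in I ×ˢ I, (V p.1 p.2 - W p.1 p.2) ∂(μ.prod μ) := by
    rw [integral_sub (graphon_integrable μ hV _) (graphon_integrable μ hW _), hV0]
    ring
  -- uniform bound for the cut-norm terms
  have hbound : ∀ (S T : {S : Set Ω // MeasurableSet S}),
      |∫ p in S.1 ×ˢ T.1, (V p.1 p.2 - W p.1 p.2) ∂(μ.prod μ)| ≤ 2 := by
    intro S T
    have h1 : |∫ p in S.1 ×ˢ T.1, (V p.1 p.2 - W p.1 p.2) ∂(μ.prod μ)|
        ≤ ∫ p in S.1 ×ˢ T.1, ‖V p.1 p.2 - W p.1 p.2‖ ∂(μ.prod μ) := by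
      rw [← Real.norm_eq_abs]
      exact norm_integral_le_integral_norm _
    refine h1.trans ?_
    have h2 : ∫ p in S.1 ×ˢ T.1, ‖V p.1 p.2 - W p.1 p.2‖ ∂(μ.prod μ)
        ≤ ∫ _ in S.1 ×ˢ T.1, (2:ℝ) ∂(μ.prod μ) := by
      refine integral_mono (hsub _).norm (integrable_const 2) fun p => ?_
      rw [Real.norm_eq_abs]
      have h3 := (hV.2.2 p.1 p.2); have h4 := (hW.2.2 p.1 p.2)
      rw [abs_le]
      constructor <;> [linarith [h3.1, h4.2]; linarith [h3.2, h4.1]]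
    refine h2.trans ?_
    rw [integral_const, smul_eq_mul]
    have h5 : (((μ.prod μ).restrict (S.1 ×ˢ T.1)) Set.univ).toReal ≤ 1 := by
      rw [Measure.restrict_apply_univ]
      exact ENNReal.toReal_mono one_ne_top prob_le_one
    rw [measureReal_def]
    nlinarith [h5, ENNReal.toReal_nonneg (a := ((μ.prod μ).restrict (S.1 ×ˢ T.1)) Set.univ)]
  have hcut : |∫ p in I ×ˢ I, (V p.1 p.2 - W p.1 p.2) ∂(μ.prod μ)|
      ≤ cutNorm μ (fun x y => V x y - W x y) := by
    rw [cutNorm]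
    have hb1 : ∀ S : {S : Set Ω // MeasurableSet S},
        (⨆ T : {T : Set Ω // MeasurableSet T},
          |∫ p in S.1 ×ˢ T.1, (V p.1 p.2 - W p.1 p.2) ∂(μ.prod μ)|) ≤ 2 := fun S =>
      ciSup_le fun T => hbound S T
    refine le_trans (le_ciSup (f := fun T : {T : Set Ω // MeasurableSet T} =>
        |∫ p in I ×ˢ T.1, (V p.1 p.2 - W p.1 p.2) ∂(μ.prod μ)|)
        ⟨2, by rintro x ⟨T, rfl⟩; exact hbound ⟨I, hImeas⟩ T⟩ ⟨I, hImeas⟩) ?_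
    exact le_ciSup (f := fun S : {S : Set Ω // MeasurableSet S} =>
        ⨆ T : {T : Set Ω // MeasurableSet T},
          |∫ p in S.1 ×ˢ T.1, (V p.1 p.2 - W p.1 p.2) ∂(μ.prod μ)|)
      ⟨2, by rintro x ⟨S, rfl⟩; exact hb1 S⟩ ⟨I, hImeas⟩
  have hWle : ∫ p in I ×ˢ I, W p.1 p.2 ∂(μ.prod μ)
      ≤ cutNorm μ (fun x y => V x y - W x y) := by
    rw [hWV]
    exact (neg_le_abs _).trans hcut
  have hlint : ∫⁻ p in I ×ˢ I, ENNReal.ofReal (W p.1 p.2) ∂(μ.prod μ)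
      = ENNReal.ofReal (∫ p in I ×ˢ I, W p.1 p.2 ∂(μ.prod μ)) := by
    rw [ofReal_integral_eq_lintegral_ofReal (graphon_integrable μ hW _)
      (Eventually.of_forall fun p => (hW.2.2 p.1 p.2).1)]
  rw [hlint]
  exact ENNReal.ofReal_le_ofReal hWle

end CutNormBridge

end FracCliqueLSC

theorem stmt_14 {Ω : Type*} [MeasurableSpace Ω] (μ : Measure Ω) [IsProbabilityMeasure μ]
    [NullSingletonClass μ] {W : Ω → Ω → ℝ} (hW : IsGraphon W) (Wn : ℕ → Ω → Ω → ℝ)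
    (hWn : ∀ n, IsGraphon (Wn n))
    (hconv : Tendsto (fun n => cutNorm μ (fun x y => Wn n x y - W x y)) atTop (nhds 0)) :
    graphonFracClique μ W ≤ liminf (fun n => graphonFracClique μ (Wn n)) atTop := by
  classical
  rw [graphonFracClique]
  refine iSup₂_le fun f hf => ?_
  obtain ⟨hfm, hffin, hfI⟩ := hf
  refine (le_liminf_iff (by isBoundedDefault) (by isBoundedDefault)).2 fun y hy => ?_
  -- truncate f
  have hsup : ∫⁻ x, f x ∂μ = ⨆ n : ℕ, ∫⁻ x, min (f x) n ∂μ := by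
    rw [← lintegral_iSup (fun n : ℕ => hfm.min measurable_const)
      (fun i j hij x => min_le_min le_rfl (by exact_mod_cast Nat.cast_le.2 hij))]
    refine lintegral_congr fun x => ?_
    refine le_antisymm ?_ (iSup_le fun n => min_le_left _ _)
    obtain ⟨n, hn⟩ := ENNReal.exists_nat_gt (hffin x)
    exact le_iSup_of_le n (le_of_eq (min_eq_left hn.le).symm)
  rw [hsup] at hy
  obtain ⟨m, hym⟩ := lt_iSup_iff.1 hy
  set M : ℝ≥0∞ := (m : ℝ≥0∞) with hMdef
  have hMtop : M ≠ ∞ := ENNReal.natCast_ne_top m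
  set fM : Ω → ℝ≥0∞ := fun x => min (f x) M with hfMdef
  have hfMm : Measurable fM := hfm.min measurable_const
  set c : ℝ≥0∞ := ∫⁻ x, fM x ∂μ with hcdef
  have hyc : y < c := hym
  obtain ⟨b, hyb, hbc⟩ := exists_between hyc
  have hb0 : b ≠ 0 := fun h => by simp [h] at hyb
  have hctop : c ≠ ∞ := by
    refine (lt_of_le_of_lt (lintegral_mono fun x => min_le_right _ _) ?_).ne
    rw [lintegral_const, measure_univ, mul_one]
    exact hMtop.lt_top
  have hbtop : b ≠ ∞ := (hbc.trans_le le_top).ne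
  have hc0 : c ≠ 0 := fun h => by simp [h] at hbc
  set t : ℝ≥0∞ := c / b with htdef
  have ht1 : 1 < t :=
    (ENNReal.lt_div_iff_mul_lt (Or.inl hb0) (Or.inl hbtop)).2 (by rwa [one_mul])
  obtain ⟨ε, hε, hstab⟩ := FracCliqueLSC.stability μ hW fM hfMm M hMtop
    (fun x => min_le_right _ _)
    (fun J hJ => le_trans (lintegral_mono fun x => min_le_left _ _) (hfI J hJ)) t ht1
  set ε' : ℝ≥0∞ := min ε 1 with hε'def
  have hε'0 : 0 < ε' := lt_min hε zero_lt_one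
  have hε'top : ε' ≠ ∞ := ((min_le_right ε 1).trans_lt one_lt_top).ne
  have hreal : (0:ℝ) < ε'.toReal := ENNReal.toReal_pos hε'0.ne' hε'top
  have hev : ∀ᶠ n in atTop,
      cutNorm μ (fun x y => Wn n x y - W x y) < ε'.toReal :=
    hconv.eventually_lt_const hreal
  filter_upwards [hev] with n hn
  -- the scaled truncation is a fractional clique of `Wn n`
  set φ : Ω → ℝ≥0∞ := fun x => (b / c) * fM x with hφdef
  have hbc_top : b / c ≠ ∞ := (ENNReal.div_lt_top hbtop hc0).ne
  have hφclique : IsFracClique μ (Wn n) φ := by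
    refine ⟨hfMm.const_mul _, fun x => ?_, fun J hJ => ?_⟩
    · exact ENNReal.mul_ne_top hbc_top
        (ne_top_of_le_ne_top hMtop (min_le_right _ _))
    · have hJE : ∫⁻ p in J ×ˢ J, ENNReal.ofReal (W p.1 p.2) ∂(μ.prod μ) ≤ ε := by
        refine le_trans (FracCliqueLSC.lintegral_indep_le_cutNorm μ hW (hWn n) hJ) ?_
        refine le_trans (ENNReal.ofReal_le_ofReal hn.le) ?_
        rw [ENNReal.ofReal_toReal hε'top]
        exact min_le_left _ _
      have hfMJ : ∫⁻ x in J, fM x ∂μ ≤ t := hstab J hJ.1 hJE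
      have : ∫⁻ x in J, φ x ∂μ = (b / c) * ∫⁻ x in J, fM x ∂μ :=
        lintegral_const_mul _ hfMm
      rw [this]
      calc (b / c) * ∫⁻ x in J, fM x ∂μ ≤ (b / c) * (c / b) :=
            mul_le_mul_right hfMJ _
        _ = (b / c) * c / b := (mul_div_assoc _ _ _).symm
        _ = b / b := by rw [ENNReal.div_mul_cancel hc0 hctop]
        _ = 1 := ENNReal.div_self hb0 hbtop
  have hval : ∫⁻ x, φ x ∂μ = b := by
    rw [hφdef]
    rw [lintegral_const_mul _ hfMm, ← hcdef, ENNReal.div_mul_cancel hc0 hctop]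
  calc y < b := hyb
    _ = ∫⁻ x, φ x ∂μ := hval.symm
    _ ≤ graphonFracClique μ (Wn n) := by
        rw [graphonFracClique]
        exact le_iSup₂_of_le φ hφclique le_rfl
end

section
/- Let G be a finite graph and W a graphon with t(G, W) > 0. Then ω_frac(G) ≤ ω_frac(W). -/
open MeasureTheory ENNReal Filter
open scoped Classical

open MeasureTheory ENNReal Filter

section Helpers
noncomputable section
variable {Ω : Type*} [MeasurableSpace Ω]

lemma measurable_updater {k : ℕ} (v : Fin k) :
    Measurable (fun p : Ω × (Fin k → Ω) => Function.update p.2 v p.1) := by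
  apply measurable_pi_lambda
  intro i
  by_cases h : i = v
  · subst h; simpa [Function.update_apply] using measurable_fst
  · simp only [Function.update_apply, h, ↓reduceIte]; exact (measurable_pi_apply i).comp measurable_snd

lemma map_update_eq {k : ℕ} (μ : Measure Ω) [IsProbabilityMeasure μ] (v : Fin k) :
    (μ.prod (Measure.pi fun _ : Fin k => μ)).map
      (fun p : Ω × (Fin k → Ω) => Function.update p.2 v p.1)
      = Measure.pi fun _ : Fin k => μ := by
  refine (Measure.pi_eq (fun s hs => ?_)).symm
  rw [Measure.map_apply (measurable_updater v) (MeasurableSet.univ_pi hs)]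
  have hpre : (fun p : Ω × (Fin k → Ω) => Function.update p.2 v p.1) ⁻¹'
      (Set.pi Set.univ s) = s v ×ˢ Set.pi Set.univ (Function.update s v Set.univ) := by
    ext p
    simp only [Set.mem_preimage, Set.mem_pi, Set.mem_univ, true_implies, Set.mem_prod]
    constructor
    · intro h
      refine ⟨by simpa using h v, fun i => ?_⟩
      by_cases hi : i = v
      · subst hi; simp
      · simpa [Function.update_apply, hi] using h i
    · rintro ⟨h1, h2⟩ i
      by_cases hi : i = v
      · subst hi; simpa using h1
      · have := h2 i; simpa [Function.update_apply, hi] using this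
  rw [hpre, Measure.prod_prod, Measure.pi_pi]
  have : ∀ i : Fin k, μ (Function.update s v Set.univ i)
      = Function.update (fun i => μ (s i)) v 1 i := by
    intro i
    by_cases hi : i = v
    · subst hi; simp
    · simp [Function.update_apply, hi]
  rw [Finset.prod_congr rfl (fun i _ => this i),
    Finset.prod_update_of_mem (Finset.mem_univ v), one_mul,
    ← Finset.mul_prod_erase Finset.univ _ (Finset.mem_univ v),
    Finset.sdiff_singleton_eq_erase]

/-- Core Fubini step. -/
lemma lintegral_update_eq {k : ℕ} (μ : Measure Ω) [IsProbabilityMeasure μ] (v : Fin k)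
    {h : (Fin k → Ω) → ℝ≥0∞} (hh : Measurable h) :
    ∫⁻ y, ∫⁻ x, h (Function.update x v y) ∂(Measure.pi fun _ : Fin k => μ) ∂μ
      = ∫⁻ x, h x ∂(Measure.pi fun _ : Fin k => μ) := by
  conv_rhs => rw [← map_update_eq μ v]
  rw [lintegral_map hh (measurable_updater v)]
  exact (lintegral_prod _ ((hh.comp (measurable_updater v)).aemeasurable)).symm

lemma map_eval_pair {k : ℕ} (μ : Measure Ω) [IsProbabilityMeasure μ] {u v : Fin k}
    (huv : u ≠ v) :
    (Measure.pi fun _ : Fin k => μ).map (fun x => (x u, x v)) = μ.prod μ := by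
  refine (Measure.prod_eq (fun s t hs ht => ?_)).symm
  rw [Measure.map_apply (by exact (measurable_pi_apply u).prodMk (measurable_pi_apply v))
    (hs.prod ht)]
  have hpre : (fun x : Fin k → Ω => (x u, x v)) ⁻¹' (s ×ˢ t)
      = Set.pi Set.univ (Function.update (Function.update (fun _ => Set.univ) v t) u s) := by
    ext x
    simp only [Set.mem_preimage, Set.mem_prod, Set.mem_pi, Set.mem_univ, true_implies]
    constructor
    · rintro ⟨h1, h2⟩ i
      by_cases hi : i = u
      · subst hi; simp [h1]
      · by_cases hi' : i = v
        · subst hi'; simp [Function.update_apply, hi, h2]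
        · simp [Function.update_apply, hi, hi']
    · intro h
      have h1 := h u; have h2 := h v
      simp only [Function.update_self] at h1
      rw [Function.update_apply] at h2
      simp [huv.symm] at h2
      exact ⟨h1, by simpa using h2⟩
  rw [hpre, Measure.pi_pi]
  have : ∀ i : Fin k, μ (Function.update (Function.update (fun _ => Set.univ) v t) u s i)
      = Function.update (Function.update (fun _ => (1 : ℝ≥0∞)) v (μ t)) u (μ s) i := by
    intro i
    by_cases hi : i = u
    · subst hi; simp
    · by_cases hi' : i = v
      · subst hi'; simp [Function.update_apply, hi]
      · simp [Function.update_apply, hi, hi']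
  rw [Finset.prod_congr rfl (fun i _ => this i),
    Finset.prod_update_of_mem (Finset.mem_univ u)]
  have hv : v ∈ Finset.univ.erase u := Finset.mem_erase.mpr ⟨huv.symm, Finset.mem_univ v⟩
  rw [Finset.sdiff_singleton_eq_erase, Finset.prod_update_of_mem hv]
  simp

end
end Helpers

theorem stmt_17 {Ω : Type*} [MeasurableSpace Ω] (μ : Measure Ω) [IsProbabilityMeasure μ]
    [NullSingletonClass μ] {W : Ω → Ω → ℝ} (hW : IsGraphon W)
    {k : ℕ} (G : SimpleGraph (Fin k)) (ht : 0 < homDensity μ W G) :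
    fracClique G ≤ graphonFracClique μ W := by
  classical
  obtain ⟨mW, _symW, rangeW⟩ := hW
  set π : Measure (Fin k → Ω) := Measure.pi fun _ : Fin k => μ with hπ
  set E : Finset (Fin k × Fin k) :=
    Finset.univ.filter (fun p : Fin k × Fin k => p.1 < p.2 ∧ G.Adj p.1 p.2) with hE
  set Fnn : (Fin k → Ω) → ℝ≥0∞ :=
    fun x => ∏ p ∈ E, ENNReal.ofReal (W (x p.1) (x p.2)) with hFnn
  have hWm : ∀ a b : Fin k, Measurable fun x : Fin k → Ω => W (x a) (x b) := by
    intro a b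
    have heq : (fun x : Fin k → Ω => W (x a) (x b)) =
        Function.uncurry W ∘ fun x => (x a, x b) := rfl
    rw [heq]
    exact mW.comp ((measurable_pi_apply a).prodMk (measurable_pi_apply b))
  have hFnnMeas : Measurable Fnn := Finset.measurable_prod _ fun p _ =>
    ENNReal.measurable_ofReal.comp (hWm p.1 p.2)
  have hFnnle : ∀ x, Fnn x ≤ 1 :=
    fun x => Finset.prod_le_one (fun _ _ => zero_le) (fun p _ => by
      rw [ENNReal.ofReal_le_one]; exact (rangeW _ _).2)
  set T : ℝ≥0∞ := ∫⁻ x, Fnn x ∂π with hT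
  have hT1 : T ≤ 1 := by
    calc T ≤ ∫⁻ _, 1 ∂π := lintegral_mono hFnnle
    _ = 1 := by simp
  have hhom : homDensity μ W G = T.toReal := by
    rw [homDensity, integral_eq_lintegral_of_nonneg_ae
      (Filter.Eventually.of_forall fun x => Finset.prod_nonneg fun p _ => (rangeW _ _).1)
      ((Finset.measurable_prod _ fun p _ => hWm p.1 p.2).aestronglyMeasurable)]
    congr 1
    refine lintegral_congr fun x => ?_
    rw [ENNReal.ofReal_prod_of_nonneg fun p _ => (rangeW _ _).1]
  have hT0 : T ≠ 0 := by
    intro h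
    rw [hhom, h] at ht
    simp at ht
  have hTtop : T ≠ ∞ := (hT1.trans_lt ENNReal.one_lt_top).ne
  set M : Fin k → Ω → ℝ≥0∞ :=
    fun v y => ∫⁻ x, Fnn (Function.update x v y) ∂π with hM
  have hMmeas : ∀ v, Measurable (M v) := fun v =>
    Measurable.lintegral_prod_right (hFnnMeas.comp (measurable_updater v))
  have hMle : ∀ v y, M v y ≤ 1 := fun v y => by
    calc M v y ≤ ∫⁻ _, 1 ∂π := lintegral_mono fun x => hFnnle _
    _ = 1 := by simp
  have hMint : ∀ v, ∫⁻ y, M v y ∂μ = T := fun v => lintegral_update_eq μ v hFnnMeas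
  rw [fracClique]
  refine iSup₂_le fun f hf => ?_
  have hf1 : ∀ v, f v ≤ 1 := fun v => by
    have h := hf {v} (Set.pairwise_singleton _ _)
    rwa [tsum_singleton] at h
  set g : Ω → ℝ≥0∞ := fun y => T⁻¹ * ∑ v, f v * M v y with hg
  have hsummeas : Measurable (fun y => ∑ v, f v * M v y) :=
    Finset.measurable_sum _ fun v _ => (hMmeas v).const_mul _
  have hgmeas : Measurable g := hsummeas.const_mul _
  have hgint : ∫⁻ y, g y ∂μ = ∑ v, f v := by
    simp only [hg]
    rw [lintegral_const_mul _ hsummeas,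
      lintegral_finset_sum _ fun v _ => (hMmeas v).const_mul _]
    have h1 : ∀ v : Fin k, ∫⁻ y, f v * M v y ∂μ = f v * T := fun v => by
      rw [lintegral_const_mul _ (hMmeas v), hMint v]
    rw [Finset.sum_congr rfl fun v _ => h1 v, ← Finset.sum_mul, mul_comm,
      mul_assoc, ENNReal.mul_inv_cancel hT0 hTtop, mul_one]
  have hkey : ∀ I : Set Ω, IsIndepSet μ W I → ∫⁻ y in I, g y ∂μ ≤ 1 := by
    intro I hI
    have hIm : MeasurableSet I := hI.1
    set ind : Ω → ℝ≥0∞ := Set.indicator I (fun _ => (1 : ℝ≥0∞)) with hind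
    have hindmeas : Measurable ind := measurable_const.indicator hIm
    have hae : ∀ᵐ x ∂π, ∀ p ∈ E, x p.1 ∈ I → x p.2 ∈ I → W (x p.1) (x p.2) = 0 := by
      rw [Filter.eventually_all_finset]
      intro p hp
      have hlt : p.1 < p.2 := by
        simp only [hE, Finset.mem_filter] at hp
        exact hp.2.1
      have hmap := map_eval_pair (k := k) μ (ne_of_lt hlt)
      have h2 := hI.2
      rw [← hmap] at h2
      exact ae_of_ae_map
        ((measurable_pi_apply p.1).prodMk (measurable_pi_apply p.2)).aemeasurable h2
    have hkey2 : ∀ᵐ x ∂π, Fnn x * ∑ v, f v * ind (x v) ≤ Fnn x := by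
      filter_upwards [hae] with x hx
      by_cases h0 : Fnn x = 0
      · simp [h0]
      · have hfac : ∀ p ∈ E, 0 < W (x p.1) (x p.2) := by
          intro p hp
          have hne := Finset.prod_ne_zero_iff.mp h0 p hp
          rcases (rangeW (x p.1) (x p.2)).1.lt_or_eq with h | h
          · exact h
          · exact absurd (by rw [← h]; simp) hne
        have hS : GraphIndep G {v : Fin k | x v ∈ I} := by
          intro a ha b hb hab hadj
          rcases lt_or_gt_of_ne hab with h | h
          · have hp : (a, b) ∈ E := by simp [hE, h, hadj]
            exact (hfac _ hp).ne' (hx _ hp ha hb)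
          · have hp : (b, a) ∈ E := by simp [hE, h, hadj.symm]
            exact (hfac _ hp).ne' (hx _ hp hb ha)
        have hsum : ∑ v, f v * ind (x v) ≤ 1 := by
          have heq : ∀ v : Fin k, f v * ind (x v) = if x v ∈ I then f v else 0 := by
            intro v
            by_cases h : x v ∈ I <;> simp [hind, h]
          rw [Finset.sum_congr rfl fun v _ => heq v, ← Finset.sum_filter]
          set S : Finset (Fin k) := Finset.univ.filter (fun v => x v ∈ I) with hSdef
          have hSsub : (↑S : Set (Fin k)) ⊆ {v : Fin k | x v ∈ I} := by
            intro v hv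
            simp only [hSdef, Finset.coe_filter, Set.mem_setOf_eq] at hv
            exact hv.2
          have h2 := hf (↑S : Set (Fin k)) (hS.mono hSsub)
          rwa [Finset.tsum_subtype'] at h2
        calc Fnn x * ∑ v, f v * ind (x v) ≤ Fnn x * 1 := mul_le_mul_right hsum _
        _ = Fnn x := mul_one _
    have hm3 : ∀ v : Fin k, Measurable fun x : Fin k → Ω => ind (x v) * Fnn x :=
      fun v => (hindmeas.comp (measurable_pi_apply v)).mul hFnnMeas
    have hm4 : ∀ v : Fin k, Measurable fun x : Fin k → Ω => f v * (ind (x v) * Fnn x) :=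
      fun v => (hm3 v).const_mul _
    have hstep : ∀ v, ∫⁻ y in I, M v y ∂μ = ∫⁻ x, ind (x v) * Fnn x ∂π := by
      intro v
      rw [← lintegral_update_eq μ v (hm3 v), ← lintegral_indicator hIm (M v)]
      refine lintegral_congr fun y => ?_
      simp only [Function.update_self]
      have hupd : Measurable fun x : Fin k → Ω => Fnn (Function.update x v y) :=
        hFnnMeas.comp ((measurable_updater v).comp (measurable_const.prodMk measurable_id))
      rw [lintegral_const_mul _ hupd]
      by_cases h : y ∈ I
      · rw [Set.indicator_of_mem h, hind, Set.indicator_of_mem h, one_mul]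
      · rw [Set.indicator_of_notMem h, hind, Set.indicator_of_notMem h, zero_mul]
    calc ∫⁻ y in I, g y ∂μ
        = T⁻¹ * ∑ v, f v * ∫⁻ y in I, M v y ∂μ := by
          simp only [hg]
          rw [lintegral_const_mul _ hsummeas,
            lintegral_finset_sum _ fun v _ => (hMmeas v).const_mul _]
          congr 1
          exact Finset.sum_congr rfl fun v _ =>
            lintegral_const_mul _ (hMmeas v)
      _ = T⁻¹ * ∑ v, ∫⁻ x, f v * (ind (x v) * Fnn x) ∂π := by
          congr 1
          refine Finset.sum_congr rfl fun v _ => ?_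
          rw [hstep v, ← lintegral_const_mul _ (hm3 v)]
      _ = T⁻¹ * ∫⁻ x, Fnn x * ∑ v, f v * ind (x v) ∂π := by
          congr 1
          rw [← lintegral_finset_sum _ fun v _ => hm4 v]
          refine lintegral_congr fun x => ?_
          rw [Finset.mul_sum]
          exact Finset.sum_congr rfl fun v _ => by ring
      _ ≤ T⁻¹ * T := mul_le_mul_right (lintegral_mono_ae hkey2) _
      _ = 1 := ENNReal.inv_mul_cancel hT0 hTtop
  have hclique : IsFracClique μ W g := by
    refine ⟨hgmeas, fun y => ?_, hkey⟩
    refine ENNReal.mul_ne_top (ENNReal.inv_ne_top.mpr hT0) ?_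
    refine (lt_of_le_of_lt
      (Finset.sum_le_sum fun v _ => mul_le_one' (hf1 v) (hMle v y)) ?_).ne
    simp
  calc ∑ v, f v = ∫⁻ y, g y ∂μ := hgint.symm
  _ ≤ graphonFracClique μ W := by
    rw [graphonFracClique]
    exact le_iSup₂_of_le g hclique le_rfl
end
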